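/- arXiv:2510.05045 — 8 statements merged into one kernel-verified Lean document; each statement's English description precedes it below -/
import Mathlib

section
/- The number of monotone extensive transformations of the chain {1,…,n} equals the n-th Catalan number (1/(n+1))·C(2n, n). -/
namespace CardCatalanAux

abbrev CatSet (n : ℕ) := {α : Fin n → Fin n // Monotone α ∧ ∀ i, i ≤ α i}

variable {n : ℕ}

lemma fix_nonempty (α : CatSet (n+1)) :
    (Finset.univ.filter fun i => α.1 i = i).Nonempty :=
  ⟨Fin.last n, by simp [le_antisymm (Fin.le_last _) (α.2.2 _)]⟩

/-- The least fixed point of a monotone extensive map on `Fin (n+1)`. -/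
def minFix (α : CatSet (n+1)) : Fin (n+1) :=
  (Finset.univ.filter fun i => α.1 i = i).min' (fix_nonempty α)

lemma minFix_fix (α : CatSet (n+1)) : α.1 (minFix α) = minFix α := by
  have := Finset.min'_mem _ (fix_nonempty α)
  simpa [minFix] using this

lemma minFix_min (α : CatSet (n+1)) {j : Fin (n+1)} (h : α.1 j = j) : minFix α ≤ j :=
  Finset.min'_le _ _ (by simpa using h)

lemma lt_minFix (α : CatSet (n+1)) {j : Fin (n+1)} (h : j < minFix α) :
    j.1 + 1 ≤ (α.1 j).1 := by
  have h1 : j.1 ≤ (α.1 j).1 := α.2.2 j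
  rcases eq_or_lt_of_le h1 with h2 | h2
  · exact absurd (minFix_min α (Fin.ext h2.symm)) (not_le.mpr h)
  · omega

/-- Split a monotone extensive map at its least fixed point. -/
def split (α : CatSet (n+1)) :
    Σ m : Fin (n+1), CatSet m.1 × CatSet (n - m.1) := by
  refine ⟨minFix α, ⟨fun j => ⟨(α.1 ⟨j.1, by omega⟩).1 - 1, ?_⟩, ?_, ?_⟩,
    ⟨fun i => ⟨(α.1 ⟨(minFix α).1 + 1 + i.1, by omega⟩).1 - ((minFix α).1 + 1), ?_⟩, ?_, ?_⟩⟩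
  · -- β bound
    have hle : α.1 ⟨j.1, by omega⟩ ≤ α.1 (minFix α) :=
      α.2.1 (show (⟨j.1, by omega⟩ : Fin (n+1)) ≤ minFix α from le_of_lt j.2)
    have hlb := lt_minFix α (show (⟨j.1, by omega⟩ : Fin (n+1)) < minFix α from j.2)
    rw [minFix_fix, Fin.le_def] at hle
    simp only [Fin.val_mk] at hlb ⊢
    omega
  · -- β monotone
    intro a b hab
    rw [Fin.le_def] at hab ⊢
    have := α.2.1 (show (⟨a.1, by omega⟩ : Fin (n+1)) ≤ ⟨b.1, by omega⟩ from hab)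
    rw [Fin.le_def] at this
    simp only [Fin.val_mk] at this ⊢
    omega
  · -- β extensive
    intro j
    have := lt_minFix α (show (⟨j.1, by omega⟩ : Fin (n+1)) < minFix α from j.2)
    rw [Fin.le_def]
    simp only [Fin.val_mk] at this ⊢
    omega
  · -- γ bound
    have := (α.1 ⟨(minFix α).1 + 1 + i.1, by omega⟩).2
    have hi := i.2
    omega
  · -- γ monotone
    intro a b hab
    rw [Fin.le_def] at hab ⊢
    have := α.2.1 (show (⟨(minFix α).1 + 1 + a.1, by omega⟩ : Fin (n+1)) ≤
      ⟨(minFix α).1 + 1 + b.1, by omega⟩ from by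
        rw [Fin.le_def]; simp only [Fin.val_mk]; omega)
    rw [Fin.le_def] at this
    simp only [Fin.val_mk] at this ⊢
    omega
  · -- γ extensive
    intro i
    have := α.2.2 ⟨(minFix α).1 + 1 + i.1, by omega⟩
    rw [Fin.le_def] at this ⊢
    simp only [Fin.val_mk] at this ⊢
    omega

lemma split_fst (α : CatSet (n+1)) : (split α).1 = minFix α := rfl

lemma split_beta_val (α : CatSet (n+1)) (j : Fin ((split α).1.1)) :
    ((split α).2.1.1 j).1
      = (α.1 ⟨j.1, by have := j.2; have := (split α).1.2; omega⟩).1 - 1 := rfl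

lemma split_gamma_val (α : CatSet (n+1)) (i : Fin (n - (split α).1.1)) :
    ((split α).2.2.1 i).1
      = (α.1 ⟨(split α).1.1 + 1 + i.1, by have := i.2; have := (split α).1.2; omega⟩).1
        - ((split α).1.1 + 1) := rfl

/-- Reassemble a monotone extensive map from its pieces. -/
def join (x : Σ m : Fin (n+1), CatSet m.1 × CatSet (n - m.1)) : CatSet (n+1) := by
  obtain ⟨m, β, γ⟩ := x
  refine ⟨fun i =>
    if h : i.1 < m.1 then ⟨(β.1 ⟨i.1, h⟩).1 + 1, by have := (β.1 ⟨i.1, h⟩).2; omega⟩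
    else if h2 : i.1 = m.1 then m
    else ⟨(γ.1 ⟨i.1 - (m.1 + 1), by have := i.2; omega⟩).1 + m.1 + 1, by
      have := (γ.1 ⟨i.1 - (m.1 + 1), by have := i.2; omega⟩).2; omega⟩, ?_, ?_⟩
  · intro a b hab
    rw [Fin.le_def] at hab
    rw [Fin.le_def]
    dsimp only
    split_ifs with h1 h2 h3 h4 h5 h6 h7 h8 h9 <;>
      try simp only [Fin.val_mk]
    · have hb := β.2.1 (show (⟨a.1, h1⟩ : Fin m.1) ≤ ⟨b.1, h2⟩ from hab)
      rw [Fin.le_def] at hb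
      try simp only [Fin.val_mk] at hb
      omega
    · have := (β.1 ⟨a.1, h1⟩).2; omega
    · have := (β.1 ⟨a.1, h1⟩).2; omega
    · omega
    · omega
    · omega
    · omega
    · omega
    · have hg := γ.2.1 (show (⟨a.1 - (m.1+1), by have := a.2; omega⟩ : Fin (n - m.1)) ≤
        ⟨b.1 - (m.1+1), by have := b.2; omega⟩ from by
          rw [Fin.le_def]; simp only [Fin.val_mk]; omega)
      rw [Fin.le_def] at hg
      try simp only [Fin.val_mk] at hg
      omega
  · intro i
    rw [Fin.le_def]
    dsimp only
    split_ifs with h1 h2 <;>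
      try simp only [Fin.val_mk]
    · have := β.2.2 ⟨i.1, h1⟩
      rw [Fin.le_def] at this
      try simp only [Fin.val_mk] at this
      omega
    · omega
    · have := γ.2.2 ⟨i.1 - (m.1 + 1), by have := i.2; omega⟩
      rw [Fin.le_def] at this
      try simp only [Fin.val_mk] at this
      omega

lemma join_val_lt (x : Σ m : Fin (n+1), CatSet m.1 × CatSet (n - m.1)) (i : Fin (n+1))
    (h : i.1 < x.1.1) : ((join x).1 i).1 = (x.2.1.1 ⟨i.1, h⟩).1 + 1 := by
  obtain ⟨m, β, γ⟩ := x
  show (dite _ _ _ : Fin (n+1)).1 = _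
  rw [dif_pos h]

lemma join_val_eq (x : Σ m : Fin (n+1), CatSet m.1 × CatSet (n - m.1)) (i : Fin (n+1))
    (h : i.1 = x.1.1) : ((join x).1 i).1 = x.1.1 := by
  obtain ⟨m, β, γ⟩ := x
  dsimp only at h ⊢
  show (dite _ _ _ : Fin (n+1)).1 = _
  rw [dif_neg (by omega), dif_pos h]

lemma join_val_gt (x : Σ m : Fin (n+1), CatSet m.1 × CatSet (n - m.1)) (i : Fin (n+1))
    (h : x.1.1 < i.1) :
    ((join x).1 i).1 = (x.2.2.1 ⟨i.1 - (x.1.1 + 1), by have := i.2; omega⟩).1 + x.1.1 + 1 := by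
  obtain ⟨m, β, γ⟩ := x
  dsimp only at h ⊢
  show (dite _ _ _ : Fin (n+1)).1 = _
  rw [dif_neg (by omega), dif_neg (by omega)]

lemma minFix_join (x : Σ m : Fin (n+1), CatSet m.1 × CatSet (n - m.1)) :
    minFix (join x) = x.1 := by
  have hfix : (join x).1 x.1 = x.1 := by
    apply Fin.ext
    rw [join_val_eq x x.1 rfl]
  have h1 : minFix (join x) ≤ x.1 := minFix_min _ hfix
  rcases eq_or_lt_of_le h1 with h2 | h2
  · exact h2
  · exfalso
    have h3 := congrArg Fin.val (minFix_fix (join x))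
    rw [join_val_lt x (minFix (join x)) h2] at h3
    have := x.2.1.2.2 ⟨(minFix (join x)).1, h2⟩
    rw [Fin.le_def] at this
    simp only [Fin.val_mk] at this
    omega

lemma join_split (α : CatSet (n+1)) : join (split α) = α := by
  apply Subtype.ext
  funext i
  apply Fin.ext
  rcases lt_trichotomy i.1 (minFix α).1 with h | h | h
  · rw [join_val_lt (split α) i h, split_beta_val]
    have hlb := lt_minFix α (show i < minFix α from h)
    have he : (⟨i.1, by omega⟩ : Fin (n+1)) = i := Fin.ext rfl
    rw [he]
    omega
  · rw [join_val_eq (split α) i h]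
    have : i = minFix α := Fin.ext h
    rw [this, minFix_fix, split_fst]
  · rw [join_val_gt (split α) i h, split_gamma_val]
    have h2 : ((split α).1 : Fin (n+1)).1 < i.1 := h
    have he : (⟨(split α).1.1 + 1 + (i.1 - ((split α).1.1 + 1)),
        by have := i.2; have := (split α).1.2; omega⟩ :
        Fin (n+1)) = i := Fin.ext (by simp only [Fin.val_mk]; omega)
    rw [he]
    have := α.2.2 i
    rw [Fin.le_def] at this
    omega

lemma join_injective :
    Function.Injective (join : (Σ m : Fin (n+1), CatSet m.1 × CatSet (n - m.1)) → _) := by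
  intro x y h
  obtain ⟨m, β, γ⟩ := x
  obtain ⟨m', β', γ'⟩ := y
  have hm : m = m' := by
    have h1 := minFix_join ⟨m, β, γ⟩
    have h2 := minFix_join ⟨m', β', γ'⟩
    rw [h] at h1
    rw [h1] at h2
    exact h2
  subst hm
  suffices hp : β = β' ∧ γ = γ' by rw [hp.1, hp.2]
  constructor
  · apply Subtype.ext
    funext j
    apply Fin.ext
    have h1 := congrArg (fun f => (f.1 ⟨j.1, by omega⟩).1) h
    rw [join_val_lt ⟨m, β, γ⟩ ⟨j.1, by omega⟩ j.2, join_val_lt ⟨m, β', γ'⟩ ⟨j.1, by omega⟩ j.2]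
      at h1
    dsimp only at h1
    have he : (⟨j.1, j.2⟩ : Fin m.1) = j := Fin.ext rfl
    rw [he] at h1
    omega
  · apply Subtype.ext
    funext i
    apply Fin.ext
    have hlt : m.1 < m.1 + 1 + i.1 := by omega
    have hbd : m.1 + 1 + i.1 < n + 1 := by have := i.2; omega
    have h1 := congrArg (fun f => (f.1 ⟨m.1 + 1 + i.1, hbd⟩).1) h
    rw [join_val_gt ⟨m, β, γ⟩ ⟨m.1 + 1 + i.1, hbd⟩ hlt,
      join_val_gt ⟨m, β', γ'⟩ ⟨m.1 + 1 + i.1, hbd⟩ hlt] at h1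
    dsimp only at h1
    have he : (⟨m.1 + 1 + i.1 - (m.1 + 1), by have := i.2; omega⟩ : Fin (n - m.1)) = i :=
      Fin.ext (by simp only [Fin.val_mk]; omega)
    rw [he] at h1
    omega

noncomputable def equivSplit :
    (Σ m : Fin (n+1), CatSet m.1 × CatSet (n - m.1)) ≃ CatSet (n+1) :=
  Equiv.ofBijective join ⟨join_injective, fun α => ⟨split α, join_split α⟩⟩

instance (n : ℕ) : Finite (CatSet n) := Subtype.finite

lemma card_succ (n : ℕ) : Nat.card (CatSet (n+1)) =
    ∑ m : Fin (n+1), Nat.card (CatSet m.1) * Nat.card (CatSet (n - m.1)) := by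
  rw [Nat.card_congr (equivSplit (n := n)).symm]
  simp only [Nat.card_eq_fintype_card, Fintype.card_sigma, Fintype.card_prod]

lemma card_zero : Nat.card (CatSet 0) = 1 := by
  have : Unique (CatSet 0) := {
    default := ⟨fun i => i.elim0, fun a => a.elim0, fun i => i.elim0⟩
    uniq := fun α => Subtype.ext (funext fun i => i.elim0) }
  exact Nat.card_unique

lemma card_eq_catalan : ∀ n, Nat.card (CatSet n) = catalan n := by
  intro n
  induction n using Nat.strong_induction_on with
  | _ n ih =>
    match n with
    | 0 => rw [card_zero, catalan_zero]
    | n + 1 =>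
      rw [card_succ, catalan_succ]
      refine Finset.sum_congr rfl fun m _ => ?_
      rw [ih m.1 (by omega), ih (n - m.1) (by omega)]

end CardCatalanAux

/-- The number of monotone extensive transformations of the chain
`Fin n` equals the `n`-th Catalan number `(1/(n+1)) * C(2n, n)`. -/
theorem card_catalan_monoid (n : ℕ) :
    Nat.card {α : Fin n → Fin n // Monotone α ∧ ∀ i, i ≤ α i} =
      (2 * n).choose n / (n + 1) := by
  rw [CardCatalanAux.card_eq_catalan n, catalan_eq_centralBinom_div, Nat.centralBinom]
end

section
/- The set S_n of stair triangular Boolean n×n matrices is closed under Boolean matrix multiplication and contains the identity matrix, hence forms a submonoid of the monoid of all Boolean n×n matrices. -/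
/-- Boolean matrix multiplication: entry `(i,j)` of `A·B` is `1` iff
`max_k min(A i k, B k j) = 1`, i.e. iff some `k` has `A i k = B k j = 1`. -/
def bmul {n : ℕ} (A B : Matrix (Fin n) (Fin n) Bool) : Matrix (Fin n) (Fin n) Bool :=
  fun i j => decide (∃ k, A i k ∧ B k j)

/-- The identity Boolean matrix. -/
def bId (n : ℕ) : Matrix (Fin n) (Fin n) Bool := fun i j => decide (i = j)

/-- A Boolean matrix is stair triangular if it is (upper) triangular (entries below
the diagonal are `0`), all diagonal entries are `1`, and `a_{ij} = 1` with `i < j`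
forces `a_{ik} = 1` and `a_{kj} = 1` for all `i ≤ k ≤ j`. -/
def StairTriangular {n : ℕ} (A : Matrix (Fin n) (Fin n) Bool) : Prop :=
  (∀ i j : Fin n, j < i → A i j = false) ∧
  (∀ i, A i i = true) ∧
  ∀ i j : Fin n, i < j → A i j = true →
    ∀ k : Fin n, i ≤ k → k ≤ j → A i k = true ∧ A k j = true

lemma bmul_eq_true {n : ℕ} (A B : Matrix (Fin n) (Fin n) Bool) (i j : Fin n) :
    bmul A B i j = true ↔ ∃ k, A i k = true ∧ B k j = true := by
  simp [bmul]

/-- The set `S_n` of stair triangular Boolean `n×n` matrices is closed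
under Boolean matrix multiplication and contains the identity matrix, hence forms a
submonoid of the monoid of all Boolean `n×n` matrices. -/
theorem stairTriangular_submonoid (n : ℕ) :
    (∀ A B : Matrix (Fin n) (Fin n) Bool,
      StairTriangular A → StairTriangular B → StairTriangular (bmul A B)) ∧
    StairTriangular (bId n) := by
  constructor
  · rintro A B ⟨hAlow, hAdiag, hAst⟩ ⟨hBlow, hBdiag, hBst⟩
    -- helper: entries of A (resp. B) equal to true force `i ≤ k`
    have hAle : ∀ i k : Fin n, A i k = true → i ≤ k := by
      intro i k h
      by_contra hlt
      rw [hAlow i k (lt_of_not_ge hlt)] at h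
      exact Bool.false_ne_true h
    have hBle : ∀ k j : Fin n, B k j = true → k ≤ j := by
      intro k j h
      by_contra hlt
      rw [hBlow k j (lt_of_not_ge hlt)] at h
      exact Bool.false_ne_true h
    refine ⟨?_, ?_, ?_⟩
    · intro i j hji
      by_contra h
      have h' : bmul A B i j = true := by
        cases hb : bmul A B i j
        · exact absurd hb h
        · rfl
      obtain ⟨m, hA, hB⟩ := (bmul_eq_true A B i j).mp h'
      exact absurd ((hAle i m hA).trans (hBle m j hB)) (not_le.mpr hji)
    · intro i
      exact (bmul_eq_true A B i i).mpr ⟨i, hAdiag i, hBdiag i⟩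
    · intro i j hij h k hik hkj
      obtain ⟨m, hA, hB⟩ := (bmul_eq_true A B i j).mp h
      have him : i ≤ m := hAle i m hA
      have hmj : m ≤ j := hBle m j hB
      constructor
      · -- (AB) i k = true
        rcases le_or_gt k m with hkm | hmk
        · -- A i k = true, witness k with B k k
          have hAik : A i k = true := by
            rcases lt_or_eq_of_le him with him' | him'
            · exact (hAst i m him' hA k hik hkm).1
            · have : k = i := le_antisymm (him' ▸ hkm) hik
              rw [this]; exact hAdiag i
          exact (bmul_eq_true A B i k).mpr ⟨k, hAik, hBdiag k⟩
        · -- m < k: B m k = true, witness m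
          have hBmk : B m k = true := by
            have hmj' : m < j := lt_of_lt_of_le hmk hkj
            exact (hBst m j hmj' hB k (le_of_lt hmk) hkj).1
          exact (bmul_eq_true A B i k).mpr ⟨m, hA, hBmk⟩
      · -- (AB) k j = true
        rcases le_or_gt m k with hmk | hkm
        · have hBkj : B k j = true := by
            rcases lt_or_eq_of_le hmj with hmj' | hmj'
            · exact (hBst m j hmj' hB k hmk hkj).2
            · have : k = j := le_antisymm hkj (hmj' ▸ hmk)
              rw [this]; exact hBdiag j
          exact (bmul_eq_true A B k j).mpr ⟨k, hAdiag k, hBkj⟩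
        · -- k < m: A k m = true, witness m
          have hAkm : A k m = true := by
            have hik' : i < m := lt_of_le_of_lt hik hkm
            exact (hAst i m hik' hA k hik (le_of_lt hkm)).2
          exact (bmul_eq_true A B k j).mpr ⟨m, hAkm, hB⟩
  · refine ⟨?_, ?_, ?_⟩
    · intro i j hji
      simp [bId, (ne_of_lt hji).symm]
    · intro i; simp [bId]
    · intro i j hij h k _ _
      simp only [bId, decide_eq_true_eq] at h
      exact absurd h (ne_of_lt hij)
end

section
/- For each monotone extensive transformation α of {1,…,n}, let S(α) be the Boolean n×n matrix whose (i,j)-entry is 1 if and only if i ≤ j ≤ α(i). Then S(α) is stair triangular, the map α ↦ S(α) is injective, every stair triangular Boolean n×n matrix equals S(α) for some monotone extensive α, and S(αβ) = S(α)·S(β) for all monotone extensive α, β (where αβ : i ↦ β(α(i)) and · is Boolean matrix multiplication). Thus α ↦ S(α) is a monoid isomorphism from C_n onto S_n. -/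
/-- The matrix `S(α)`: its `(i,j)` entry is `1` iff `i ≤ j ≤ α(i)`. -/
def Smat {n : ℕ} (α : Fin n → Fin n) : Matrix (Fin n) (Fin n) Bool :=
  fun i j => decide (i ≤ j ∧ j ≤ α i)

/-- For every monotone extensive `α`, the matrix `S(α)` is stair
triangular; the map `α ↦ S(α)` is injective on monotone extensive transformations;
every stair triangular Boolean matrix is `S(α)` for some monotone extensive `α`;
and `S(αβ) = S(α)·S(β)` (with `αβ = β ∘ α`). Thus `α ↦ S(α)` is a monoid
isomorphism from `C_n` onto `S_n`. -/
theorem Smat_monoid_iso (n : ℕ) :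
    (∀ α : Fin n → Fin n, Monotone α → (∀ i, i ≤ α i) → StairTriangular (Smat α)) ∧
    (∀ α β : Fin n → Fin n, (Monotone α ∧ ∀ i, i ≤ α i) → (Monotone β ∧ ∀ i, i ≤ β i) →
      Smat α = Smat β → α = β) ∧
    (∀ A : Matrix (Fin n) (Fin n) Bool, StairTriangular A →
      ∃ α : Fin n → Fin n, Monotone α ∧ (∀ i, i ≤ α i) ∧ Smat α = A) ∧
    (∀ α β : Fin n → Fin n, (Monotone α ∧ ∀ i, i ≤ α i) → (Monotone β ∧ ∀ i, i ≤ β i) →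
      Smat (β ∘ α) = bmul (Smat α) (Smat β)) := by
  have smem : ∀ (α : Fin n → Fin n) (i j : Fin n),
      Smat α i j = true ↔ (i ≤ j ∧ j ≤ α i) := by
    intro α i j; simp [Smat]
  refine ⟨?_, ?_, ?_, ?_⟩
  · intro α hmono hext
    refine ⟨?_, ?_, ?_⟩
    · intro i j hji
      simp only [Smat, decide_eq_false_iff_not]
      rintro ⟨h1, -⟩; exact absurd h1 (not_le.2 hji)
    · intro i; rw [smem]; exact ⟨le_refl i, hext i⟩
    · intro i j hij hAij k hik hkj
      rw [smem] at hAij ⊢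
      constructor
      · exact ⟨hik, le_trans hkj hAij.2⟩
      · rw [smem]
        exact ⟨hkj, le_trans hAij.2 (hmono hik)⟩
  · intro α β ⟨hαm, hαe⟩ ⟨hβm, hβe⟩ hS
    funext i
    have h1 : Smat α i (α i) = true := (smem α i (α i)).2 ⟨hαe i, le_refl _⟩
    have h2 : Smat β i (β i) = true := (smem β i (β i)).2 ⟨hβe i, le_refl _⟩
    rw [hS, smem] at h1
    rw [← hS, smem] at h2
    exact le_antisymm h1.2 h2.2
  · intro A hA
    obtain ⟨htri, hdiag, hstair⟩ := hA
    have hne : ∀ i : Fin n, (Finset.univ.filter (fun j => A i j = true)).Nonempty :=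
      fun i => ⟨i, by simp [hdiag i]⟩
    set α : Fin n → Fin n := fun i => (Finset.univ.filter (fun j => A i j = true)).max' (hne i)
      with hα
    have hAmax : ∀ i, A i (α i) = true := by
      intro i
      have := Finset.max'_mem _ (hne i)
      simpa using this
    have hle : ∀ i j, A i j = true → j ≤ α i := by
      intro i j h
      exact Finset.le_max' _ j (by simp [h])
    have hext : ∀ i, i ≤ α i := fun i => hle i i (hdiag i)
    have hmono : Monotone α := by
      intro i₁ i₂ h12
      by_contra hlt
      push_neg at hlt
      have h1lt : i₁ < α i₁ := lt_of_le_of_lt (le_trans h12 (hext i₂)) hlt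
      have hkey := hstair i₁ (α i₁) h1lt (hAmax i₁) i₂ h12 (le_of_lt (lt_of_le_of_lt (hext i₂) hlt))
      exact absurd (hle i₂ (α i₁) hkey.2) (not_le.2 hlt)
    refine ⟨α, hmono, hext, ?_⟩
    funext i j
    rcases h : A i j with _ | _
    · simp only [Smat, decide_eq_false_iff_not]
      rintro ⟨hij, hja⟩
      rcases eq_or_lt_of_le hij with rfl | hij'
      · rw [hdiag i] at h; exact absurd h (by simp)
      · have : i < α i := lt_of_lt_of_le hij' hja
        have := (hstair i (α i) this (hAmax i) j (le_of_lt hij') hja).1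
        rw [this] at h; exact absurd h (by simp)
    · rw [smem]
      have hij : i ≤ j := by
        by_contra hc
        push_neg at hc
        rw [htri i j hc] at h; exact absurd h (by simp)
      exact ⟨hij, hle i j h⟩
  · intro α β ⟨hαm, hαe⟩ ⟨hβm, hβe⟩
    funext i j
    simp only [bmul, Smat, Function.comp_apply, decide_eq_decide]
    simp only [decide_eq_true_eq]
    rw [decide_eq_decide]
    constructor
    · rintro ⟨hij, hj⟩
      refine ⟨min j (α i), ?_⟩
      rcases le_total j (α i) with hc | hc
      · rw [min_eq_left hc]
        exact ⟨⟨hij, hc⟩, le_refl j, hβe j⟩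
      · rw [min_eq_right hc]
        exact ⟨⟨hαe i, le_refl _⟩, hc, hj⟩
    · rintro ⟨k, ⟨hik, hka⟩, hkj, hjb⟩
      exact ⟨le_trans hik hkj, le_trans hjb (hβm hka)⟩
end

section
/- For monotone extensive transformations α, β of {1,…,n}, the map S satisfies S(α + β) = S(α) + S(β), where α + β is the pointwise maximum of α and β and the sum of Boolean matrices is entrywise maximum. Hence α ↦ S(α) is an isomorphism of additively idempotent semirings from C_n (with pointwise-max addition and composition) onto S_n (with entrywise-max addition and Boolean matrix multiplication). -/
/-- Boolean matrix addition: entrywise maximum. -/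
def badd {n : ℕ} (A B : Matrix (Fin n) (Fin n) Bool) : Matrix (Fin n) (Fin n) Bool :=
  fun i j => A i j || B i j

/-- For monotone extensive `α, β`, `S(α + β) = S(α) + S(β)` (pointwise
max of transformations, entrywise max of Boolean matrices). Hence `α ↦ S(α)` is an
isomorphism of additively idempotent semirings from `C_n` (pointwise-max addition and
composition) onto `S_n` (entrywise-max addition and Boolean matrix multiplication):
it is additive, a bijection onto the stair triangular matrices, and multiplicative. -/
theorem Smat_semiring_iso (n : ℕ) :
    (∀ α β : Fin n → Fin n, (Monotone α ∧ ∀ i, i ≤ α i) → (Monotone β ∧ ∀ i, i ≤ β i) →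
      Smat (fun i => max (α i) (β i)) = badd (Smat α) (Smat β)) ∧
    Set.BijOn (Smat (n := n)) {α | Monotone α ∧ ∀ i, i ≤ α i} {A | StairTriangular A} ∧
    (∀ α β : Fin n → Fin n, (Monotone α ∧ ∀ i, i ≤ α i) → (Monotone β ∧ ∀ i, i ≤ β i) →
      Smat (β ∘ α) = bmul (Smat α) (Smat β)) := by

  constructor
  · -- additivity
    intro α β _ _
    funext i j
    simp only [Smat, badd, le_max_iff, and_or_left, Bool.decide_or]
  constructor
  · -- bijectivity
    refine ⟨?_, ?_, ?_⟩
    · -- MapsTo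
      rintro α ⟨hm, he⟩
      refine ⟨?_, ?_, ?_⟩
      · intro i j hji
        simp only [Smat, decide_eq_false_iff_not, not_and]
        intro h
        exact absurd hji (not_lt.2 h)
      · intro i
        simp [Smat, he i]
      · intro i j hij hAij k hik hkj
        simp only [Smat, decide_eq_true_eq] at hAij ⊢
        obtain ⟨h1, h2⟩ := hAij
        exact ⟨⟨hik, hkj.trans h2⟩, ⟨hkj, h2.trans (hm hik)⟩⟩
    · -- InjOn
      rintro α ⟨hmα, heα⟩ β ⟨hmβ, heβ⟩ h
      funext i
      have h1 := congrFun (congrFun h i) (α i)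
      have h2 := congrFun (congrFun h i) (β i)
      simp only [Smat, decide_eq_decide] at h1 h2
      exact le_antisymm (h1.mp ⟨heα i, le_refl _⟩).2 (h2.mpr ⟨heβ i, le_refl _⟩).2
    · -- SurjOn
      rintro A ⟨htri, hdiag, hstair⟩
      have key : ∀ i j : Fin n, A i j = true → ∀ k, i ≤ k → k ≤ j →
          A i k = true ∧ A k j = true := by
        intro i j hij k hik hkj
        rcases lt_or_eq_of_le (hik.trans hkj) with h | h
        · exact hstair i j h hij k hik hkj
        · subst h
          have hk : k = i := le_antisymm hkj hik
          subst hk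
          exact ⟨hij, hij⟩
      have hne : ∀ i : Fin n, (Finset.univ.filter (fun j => A i j = true)).Nonempty :=
        fun i => ⟨i, by simp [hdiag i]⟩
      set α := fun i => (Finset.univ.filter (fun j => A i j = true)).max' (hne i) with hα
      have hmem : ∀ i, A i (α i) = true := by
        intro i
        have := Finset.max'_mem _ (hne i)
        simpa [hα] using this
      have hle : ∀ i j, A i j = true → j ≤ α i := fun i j hj =>
        Finset.le_max' _ _ (by simp [hj])
      have hext : ∀ i, i ≤ α i := fun i => hle i i (hdiag i)
      have hmono : Monotone α := by
        intro i i' hii'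
        rcases le_or_gt i' (α i) with h | h
        · exact hle i' _ (key i (α i) (hmem i) i' hii' h).2
        · exact h.le.trans (hext i')
      refine ⟨α, ⟨hmono, hext⟩, ?_⟩
      funext i j
      cases hb : A i j with
      | true =>
        have hij : i ≤ j := not_lt.1 fun hlt => by simp [htri i j hlt] at hb
        simp [Smat, hij, hle i j hb]
      | false =>
        simp only [Smat, decide_eq_false_iff_not, not_and]
        intro h1 h2
        exact absurd (key i (α i) (hmem i) j h1 h2).1 (by simp [hb])
  · -- multiplicativity
    rintro α β ⟨hmα, heα⟩ ⟨hmβ, heβ⟩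
    funext i j
    simp only [Smat, bmul, Function.comp_apply, decide_eq_decide, decide_eq_true_eq]
    constructor
    · rintro ⟨hij, hj⟩
      rcases le_or_gt j (α i) with h | h
      · exact ⟨j, ⟨hij, h⟩, le_refl _, heβ j⟩
      · exact ⟨α i, ⟨heα i, le_refl _⟩, h.le, hj⟩
    · rintro ⟨k, ⟨hik, hkα⟩, hkj, hjβ⟩
      exact ⟨hik.trans hkj, hjβ.trans (hmβ hkα)⟩
end

section
/- For all monotone decreasing transformations α, β of the chain {1,…,n+1}, M(αβ) = M(α)·M(β), where αβ denotes the transformation i ↦ β(α(i)) and · is Boolean matrix multiplication (entry operations x + y := max{x,y}, x·y := min{x,y}). -/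
/-- The matrix `M(α)`: in 1-indexed terms its `(i,j)` entry is `1` iff
`α(i+1) - 1 ≥ j`; here (0-indexed) the `(i,j)` entry is `1` iff `j < α(i.succ)`. -/
def Mmat {n : ℕ} (α : Fin (n + 1) → Fin (n + 1)) : Matrix (Fin n) (Fin n) Bool :=
  fun i j => decide ((j : ℕ) < (α i.succ : ℕ))

/-- For all monotone decreasing transformations `α, β` of the chain
with `n+1` elements, `M(αβ) = M(α)·M(β)`, where `αβ` is `α` followed by `β`. -/
theorem Mmat_mul (n : ℕ) (α β : Fin (n + 1) → Fin (n + 1))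
    (hα : Monotone α ∧ ∀ i, α i ≤ i) (hβ : Monotone β ∧ ∀ i, β i ≤ i) :
    Mmat (β ∘ α) = bmul (Mmat α) (Mmat β) := by
  funext i j
  simp only [Mmat, bmul, Function.comp_apply, decide_eq_decide, decide_eq_true_eq]
  constructor
  · intro h
    -- h : j < β (α i.succ)
    have h1 : (β (α i.succ) : ℕ) ≤ (α i.succ : ℕ) := hβ.2 _
    have hpos : 0 < (α i.succ : ℕ) := lt_of_le_of_lt (Nat.zero_le _) (lt_of_lt_of_le h h1)
    have hle : (α i.succ : ℕ) ≤ n := Nat.lt_succ_iff.mp (α i.succ).isLt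
    refine ⟨⟨(α i.succ : ℕ) - 1, by omega⟩, by show ((α i.succ : ℕ) - 1) < (α i.succ : ℕ); omega, ?_⟩
    have : (Fin.succ ⟨(α i.succ : ℕ) - 1, by omega⟩ : Fin (n+1)) = α i.succ := by
      ext; simp [Fin.val_succ]; omega
    rw [this]; exact h
  · rintro ⟨k, hk1, hk2⟩
    have : k.succ ≤ α i.succ := by
      rw [Fin.le_def, Fin.val_succ]; omega
    exact lt_of_lt_of_le hk2 (hβ.1 this)
end

section
/- Let P be the Boolean n×n matrix with 1s exactly on the antidiagonal. The map α ↦ P·M(α)·P is a faithful representation of the semiring C⁻_{n+1} in the semiring of upper triangular Boolean n×n matrices: for all monotone decreasing transformations α, β of {1,…,n+1}, the matrix P·M(α)·P is upper triangular, P·M(αβ)·P = (P·M(α)·P)·(P·M(β)·P), P·M(α+β)·P = P·M(α)·P + P·M(β)·P, and the map is injective. -/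
/-- The antidiagonal permutation matrix: `P_{ij} = 1` iff `i + j = n + 1`
(1-indexed), i.e. iff `i + j + 1 = n` for 0-indexed `i, j : Fin n`. -/
def Pmat (n : ℕ) : Matrix (Fin n) (Fin n) Bool :=
  fun i j => decide ((i : ℕ) + (j : ℕ) + 1 = n)

/-- A Boolean matrix is upper triangular if `a_{ij} = 0` whenever `j < i`. -/
def UpperTri {n : ℕ} (A : Matrix (Fin n) (Fin n) Bool) : Prop :=
  ∀ i j : Fin n, j < i → A i j = false

/-- The representation `α ↦ P·M(α)·P`. -/
def PMP {n : ℕ} (α : Fin (n + 1) → Fin (n + 1)) : Matrix (Fin n) (Fin n) Bool :=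
  bmul (bmul (Pmat n) (Mmat α)) (Pmat n)

lemma Pmat_eq_iff {n : ℕ} (i j : Fin n) : Pmat n i j = true ↔ j = i.rev := by
  unfold Pmat
  rw [decide_eq_true_iff]
  constructor
  · intro h
    apply Fin.ext
    rw [Fin.val_rev]
    omega
  · rintro rfl
    rw [Fin.val_rev]
    have := i.isLt
    omega

lemma bmul_P_left {n : ℕ} (A : Matrix (Fin n) (Fin n) Bool) (i j : Fin n) :
    bmul (Pmat n) A i j = A i.rev j := by
  unfold bmul
  have h : (∃ k, Pmat n i k = true ∧ A k j = true) ↔ A i.rev j = true := by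
    constructor
    · rintro ⟨k, hk, h⟩
      rwa [(Pmat_eq_iff i k).1 hk] at h
    · intro h
      exact ⟨i.rev, (Pmat_eq_iff i i.rev).2 rfl, h⟩
  simp only [h, Bool.decide_coe]

lemma bmul_P_right {n : ℕ} (A : Matrix (Fin n) (Fin n) Bool) (i j : Fin n) :
    bmul A (Pmat n) i j = A i j.rev := by
  unfold bmul
  have h : (∃ k, A i k = true ∧ Pmat n k j = true) ↔ A i j.rev = true := by
    constructor
    · rintro ⟨k, h, hk⟩
      have hk' : k = j.rev := by
        have := (Pmat_eq_iff k j).1 hk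
        rw [this, Fin.rev_rev]
      rwa [hk'] at h
    · intro h
      refine ⟨j.rev, h, (Pmat_eq_iff j.rev j).2 ?_⟩
      rw [Fin.rev_rev]
  simp only [h, Bool.decide_coe]

lemma PMP_apply {n : ℕ} (α : Fin (n + 1) → Fin (n + 1)) (i j : Fin n) :
    PMP α i j = decide ((j.rev : ℕ) < (α i.rev.succ : ℕ)) := by
  unfold PMP
  rw [bmul_P_right, bmul_P_left]
  rfl

lemma nat_eq_of_lt_iff {a b n : ℕ} (ha : a ≤ n) (hb : b ≤ n)
    (h : ∀ t < n, (t < a ↔ t < b)) : a = b := by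
  rcases Nat.lt_trichotomy a b with h1 | h1 | h1
  · have := (h a (lt_of_lt_of_le h1 hb)).2 h1
    omega
  · exact h1
  · have := (h b (lt_of_lt_of_le h1 ha)).1 h1
    omega

/-- The map `α ↦ P·M(α)·P` is a faithful representation of the
semiring `C⁻_{n+1}` in the semiring of upper triangular Boolean `n×n` matrices:
for monotone decreasing `α, β` of the chain with `n+1` elements, `P·M(α)·P` is
upper triangular, the map preserves products (`αβ` is `α` followed by `β`) and
pointwise-max sums, and the map is injective on monotone decreasing
transformations. -/
theorem PMP_faithful_representation (n : ℕ) :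
    (∀ α : Fin (n + 1) → Fin (n + 1), (Monotone α ∧ ∀ i, α i ≤ i) →
      UpperTri (PMP α)) ∧
    (∀ α β : Fin (n + 1) → Fin (n + 1),
      (Monotone α ∧ ∀ i, α i ≤ i) → (Monotone β ∧ ∀ i, β i ≤ i) →
      PMP (β ∘ α) = bmul (PMP α) (PMP β) ∧
      PMP (fun i => max (α i) (β i)) = badd (PMP α) (PMP β)) ∧
    Set.InjOn (PMP (n := n)) {α | Monotone α ∧ ∀ i, α i ≤ i} := by
  refine ⟨?_, ?_, ?_⟩
  · -- upper triangular
    rintro α ⟨-, hdec⟩ i j hji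
    rw [PMP_apply, decide_eq_false_iff_not, not_lt]
    have h1 : (i.rev : ℕ) < (j.rev : ℕ) := Fin.rev_lt_rev.2 hji
    have h2 : (α i.rev.succ : ℕ) ≤ (i.rev.succ : ℕ) := hdec i.rev.succ
    rw [Fin.val_succ] at h2
    omega
  · -- products and sums
    rintro α β ⟨hαmono, hαdec⟩ ⟨hβmono, hβdec⟩
    constructor
    · funext i j
      rw [PMP_apply]
      unfold bmul
      have key : ((j.rev : ℕ) < ((β ∘ α) i.rev.succ : ℕ)) ↔
          ∃ k : Fin n, PMP α i k = true ∧ PMP β k j = true := by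
        constructor
        · intro hj
          simp only [Function.comp_apply] at hj
          set a := α i.rev.succ with ha
          have hapos : 0 < (a : ℕ) := by
            by_contra hc
            have ha0 : a = 0 := by
              apply Fin.ext; simpa using Nat.le_zero.mp (not_lt.mp hc)
            rw [ha0] at hj
            have : (β 0 : ℕ) ≤ 0 := hβdec 0
            omega
          have han : (a : ℕ) ≤ n := Nat.lt_succ_iff.mp a.isLt
          set m : Fin n := ⟨(a : ℕ) - 1, by omega⟩ with hm
          have hms : m.succ = a := by
            apply Fin.ext
            rw [Fin.val_succ]
            simp [hm]
            omega
          refine ⟨m.rev, ?_, ?_⟩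
          · rw [PMP_apply, decide_eq_true_iff, Fin.rev_rev]
            simp [hm]
            omega
          · rw [PMP_apply, decide_eq_true_iff, Fin.rev_rev, hms]
            exact hj
        · rintro ⟨k, hk1, hk2⟩
          rw [PMP_apply, decide_eq_true_iff] at hk1 hk2
          simp only [Function.comp_apply]
          have h1 : (k.rev.succ : ℕ) ≤ (α i.rev.succ : ℕ) := by
            rw [Fin.val_succ]; omega
          have h2 : β k.rev.succ ≤ β (α i.rev.succ) := hβmono h1
          calc (j.rev : ℕ) < (β k.rev.succ : ℕ) := hk2
            _ ≤ (β (α i.rev.succ) : ℕ) := h2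
      rw [← decide_eq_decide] at key
      rw [key]
    · funext i j
      rw [PMP_apply]
      unfold badd
      rw [PMP_apply, PMP_apply]
      have hmax : ((max (α i.rev.succ) (β i.rev.succ) : Fin (n+1)) : ℕ)
          = max (α i.rev.succ : ℕ) (β i.rev.succ : ℕ) := by
        rcases le_total (α i.rev.succ) (β i.rev.succ) with hle | hle
        · rw [max_eq_right hle, max_eq_right (Fin.le_def.mp hle)]
        · rw [max_eq_left hle, max_eq_left (Fin.le_def.mp hle)]
      have key : ((j.rev : ℕ) < ((max (α i.rev.succ) (β i.rev.succ) : Fin (n+1)) : ℕ)) ↔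
          ((j.rev : ℕ) < (α i.rev.succ : ℕ) ∨ (j.rev : ℕ) < (β i.rev.succ : ℕ)) := by
        rw [hmax, lt_max_iff]
      rw [← decide_eq_decide] at key
      rw [key]
      exact Bool.decide_or _ _
  · -- injectivity
    rintro α ⟨hαmono, hαdec⟩ β ⟨hβmono, hβdec⟩ h
    funext i
    induction i using Fin.cases with
    | zero =>
      have h1 : α 0 = 0 := le_antisymm (hαdec 0) (Fin.zero_le _)
      have h2 : β 0 = 0 := le_antisymm (hβdec 0) (Fin.zero_le _)
      rw [h1, h2]
    | succ m =>
      have key : ∀ t : Fin n, ((t : ℕ) < (α m.succ : ℕ) ↔ (t : ℕ) < (β m.succ : ℕ)) := by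
        intro t
        have := congrFun (congrFun h m.rev) t.rev
        rw [PMP_apply, PMP_apply, Fin.rev_rev, Fin.rev_rev, decide_eq_decide] at this
        exact this
      apply Fin.ext
      refine nat_eq_of_lt_iff (Nat.lt_succ_iff.mp (α m.succ).isLt)
        (Nat.lt_succ_iff.mp (β m.succ).isLt) ?_
      intro t ht
      exact key ⟨t, ht⟩
end

section
/- For n ≥ 1, the transformations β, γ of the chain {1,…,n+1} defined by β(i) = i+1 for i ≤ n, β(n+1) = n+1, and γ(i) = n for i ≤ n, γ(n+1) = n+1, are monotone and extensive, and they violate the identity x^{n−1} y^{n−1} = x^n y^{n−1} + x^{n−1} y^n in the semiring C_{n+1}: namely (β^{n−1} γ^{n−1})(1) = n while (β^n γ^{n−1} + β^{n−1} γ^n)(1) = n+1, where products are composition (x then y), powers are iterated composition, and + is pointwise maximum. -/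
/-- The transformation `β` of the chain with `n+1` elements given (1-indexed) by
`β(i) = i + 1` for `i ≤ n` and `β(n+1) = n+1`. -/
def shiftMap (n : ℕ) : Fin (n + 1) → Fin (n + 1) :=
  fun i => if h : (i : ℕ) < n then ⟨(i : ℕ) + 1, by omega⟩ else i

/-- The transformation `γ` of the chain with `n+1` elements given (1-indexed) by
`γ(i) = n` for `i ≤ n` and `γ(n+1) = n+1`. -/
def collapseMap (n : ℕ) : Fin (n + 1) → Fin (n + 1) :=
  fun i => if (i : ℕ) < n then ⟨n - 1, by omega⟩ else i

lemma shift_iter (n k : ℕ) (hk : k ≤ n) :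
    (shiftMap n)^[k] ⟨0, Nat.succ_pos n⟩ = ⟨k, Nat.lt_succ_of_le hk⟩ := by
  induction k with
  | zero => rfl
  | succ m ih =>
    rw [Function.iterate_succ_apply', ih (by omega), shiftMap]
    simp only [dif_pos (show m < n by omega)]

lemma collapse_fix_pred (n : ℕ) (hn : 1 ≤ n) (m : ℕ) :
    (collapseMap n)^[m] ⟨n - 1, Nat.sub_lt_succ n 1⟩ = (⟨n - 1, Nat.sub_lt_succ n 1⟩ : Fin (n + 1)) := by
  apply Function.iterate_fixed
  simp [collapseMap, if_pos (show n - 1 < n by omega)]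

lemma collapse_fix_top (n : ℕ) (m : ℕ) :
    (collapseMap n)^[m] ⟨n, Nat.lt_succ_self n⟩ = (⟨n, Nat.lt_succ_self n⟩ : Fin (n + 1)) := by
  apply Function.iterate_fixed
  simp [collapseMap]

/-- For `n ≥ 1`, the transformations `β = shiftMap n` and
`γ = collapseMap n` of the chain with `n+1` elements are monotone and extensive and
violate the identity `x^{n-1} y^{n-1} = x^n y^{n-1} + x^{n-1} y^n` in the semiring
`C_{n+1}`: `(β^{n-1} γ^{n-1})(1) = n` while
`(β^n γ^{n-1} + β^{n-1} γ^n)(1) = n+1` (products are composition, `x` then `y`;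
`+` is pointwise max; everything here written 0-indexed). -/
theorem catalan_semiring_fails_identity (n : ℕ) (hn : 1 ≤ n) :
    Monotone (shiftMap n) ∧ (∀ i, i ≤ shiftMap n i) ∧
    Monotone (collapseMap n) ∧ (∀ i, i ≤ collapseMap n i) ∧
    (collapseMap n)^[n - 1] ((shiftMap n)^[n - 1] ⟨0, by omega⟩) =
      (⟨n - 1, by omega⟩ : Fin (n + 1)) ∧
    max ((collapseMap n)^[n - 1] ((shiftMap n)^[n] ⟨0, by omega⟩))
        ((collapseMap n)^[n] ((shiftMap n)^[n - 1] ⟨0, by omega⟩)) =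
      (⟨n, by omega⟩ : Fin (n + 1)) := by
  refine ⟨?_, ?_, ?_, ?_, ?_, ?_⟩
  · intro i j hij
    simp only [shiftMap]
    rw [Fin.le_def] at hij
    split <;> split <;> rw [Fin.le_def] <;> (try simp only [Fin.val_mk]) <;> omega
  · intro i
    simp only [shiftMap]
    split <;> rw [Fin.le_def] <;> (try simp only [Fin.val_mk]) <;> omega
  · intro i j hij
    simp only [collapseMap]
    rw [Fin.le_def] at hij
    split <;> split <;> rw [Fin.le_def] <;> (try simp only [Fin.val_mk]) <;> omega
  · intro i
    simp only [collapseMap]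
    split <;> rw [Fin.le_def] <;> (try simp only [Fin.val_mk]) <;> omega
  · rw [shift_iter n (n-1) (by omega), collapse_fix_pred n hn]
  · rw [shift_iter n n le_rfl, shift_iter n (n-1) (by omega),
      collapse_fix_top, collapse_fix_pred n hn]
    simp [Fin.le_def, max_eq_left, Nat.sub_le]
end

section
/- For every n ≥ 1: (i) there is no injective map f from the set of monotone extensive transformations of {1,…,n+2} to the set of upper triangular Boolean n×n matrices satisfying f(αβ) = f(α)·f(β) for all α, β (so the Catalan monoid C_{n+2} does not embed into the monoid T_n); and (ii) there is no injective map g from the set of monotone extensive transformations of {1,…,n+1} to the set of upper triangular Boolean n×n matrices satisfying both g(αβ) = g(α)·g(β) and g(α+β) = g(α) + g(β) for all α, β (so the Catalan semiring C_{n+1} does not embed into the semiring T_n), and likewise no such injective multiplication- and addition-preserving map exists from the set of monotone decreasing transformations of {1,…,n+2} (so C⁻_{n+2} does not embed into T_n). -/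
/-! ### Auxiliary material -/

section Aux

open Finset

/-- triangular numbers -/
def tri : ℕ → ℕ
  | 0 => 0
  | (u+1) => tri u + u

lemma tri_succ (u : ℕ) : tri (u+1) = tri u + u := rfl

lemma tri_mono : Monotone tri := by
  apply monotone_nat_of_le_succ
  intro u; rw [tri_succ]; omega

lemma tri_gap {u' u : ℕ} (h1 : 1 ≤ u') (h2 : u' ≤ u) : tri u' + (u - u') ≤ tri u := by
  induction u with
  | zero => omega
  | succ v ih =>
    rcases Nat.eq_or_lt_of_le h2 with h | h
    · subst h; omega
    · have := ih (by omega)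
      rw [tri_succ]; omega

lemma tri_interval {m t : ℕ} (h : t < tri m) :
    ∃ u, 1 ≤ u ∧ u + 1 ≤ m ∧ tri u ≤ t ∧ t < tri (u+1) := by
  induction m with
  | zero => simp [tri] at h
  | succ v ih =>
    by_cases hv : t < tri v
    · obtain ⟨u, hu⟩ := ih hv
      exact ⟨u, hu.1, by omega, hu.2.2⟩
    · refine ⟨v, ?_, le_refl _, by omega, h⟩
      rcases Nat.eq_zero_or_pos v with h0 | h0
      · subst h0; simp [tri] at h
      · exact h0

lemma two_tri (u : ℕ) : 2 * tri u = u * u - u := by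
  induction u with
  | zero => rfl
  | succ v ih =>
    have h2 : v ≤ v * v := by
      cases v with
      | zero => simp
      | succ w => exact Nat.le_mul_of_pos_left _ (Nat.succ_pos w)
    have h3 : (v+1)*(v+1) = v*v + 2*v + 1 := by ring
    rw [tri_succ]; omega

/-- the number of `true` entries (within a predicate) of a boolean matrix -/
def cnt {n : ℕ} (R : Fin n → Fin n → Bool) : ℕ :=
  (Finset.univ.filter (fun p : Fin n × Fin n => R p.1 p.2 = true)).card

lemma cnt_lt {n : ℕ} {R S : Fin n → Fin n → Bool}
    (hsub : ∀ i j, R i j = true → S i j = true)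
    (hne : ∃ i j, R i j = false ∧ S i j = true) : cnt R < cnt S := by
  apply Finset.card_lt_card
  constructor
  · intro p hp
    simp only [mem_filter, mem_univ, true_and] at hp ⊢
    exact hsub _ _ hp
  · intro hcon
    obtain ⟨i, j, h1, h2⟩ := hne
    have := hcon (by simp [h2] : (i,j) ∈ _)
    simp only [mem_filter, mem_univ, true_and] at this
    rw [this] at h1; exact absurd h1 (by simp)

lemma cnt_le {n : ℕ} {R S : Fin n → Fin n → Bool}
    (hsub : ∀ i j, R i j = true → S i j = true) : cnt R ≤ cnt S := by
  apply Finset.card_le_card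
  intro p hp
  simp only [mem_filter, mem_univ, true_and] at hp ⊢
  exact hsub _ _ hp

lemma cnt_lt_pairs (n : ℕ) : cnt (fun i j : Fin n => decide (i < j)) = tri n := by
  classical
  set s : Finset (Fin n × Fin n) := univ.filter (fun p => p.1 < p.2) with hs
  set s' : Finset (Fin n × Fin n) := univ.filter (fun p => p.2 < p.1) with hs'
  have hcnt : cnt (fun i j : Fin n => decide (i < j)) = s.card := by
    unfold cnt; congr 1; apply filter_congr; intro p _; simp
  have hswap : s.card = s'.card := by
    apply Finset.card_bij (fun p _ => (p.2, p.1))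
    · intro p hp; simp only [hs, hs', mem_filter, mem_univ, true_and] at *; exact hp
    · intro p hp q hq h
      simp only [Prod.mk.injEq] at h
      exact Prod.ext h.2 h.1
    · intro p hp
      refine ⟨(p.2, p.1), ?_, rfl⟩
      simp only [hs, hs', mem_filter, mem_univ, true_and] at *; exact hp
  have hunion : s ∪ s' = (univ : Finset (Fin n)).offDiag := by
    ext p
    simp only [hs, hs', mem_union, mem_filter, mem_univ, true_and, Finset.mem_offDiag]
    constructor
    · rintro (h | h)
      · exact ne_of_lt h
      · exact (ne_of_lt h).symm
    · intro h
      rcases lt_or_gt_of_ne h with h | h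
      · exact Or.inl h
      · exact Or.inr h
  have hdisj : Disjoint s s' := by
    rw [Finset.disjoint_left]
    intro p hp hp'
    simp only [hs, hs', mem_filter, mem_univ, true_and] at hp hp'
    exact absurd hp (not_lt_of_gt hp')
  have hcard : s.card + s'.card = n * n - n := by
    rw [← Finset.card_union_of_disjoint hdisj, hunion, Finset.offDiag_card]
    simp
  have := two_tri n
  omega

lemma cnt_le_pairs (n : ℕ) : cnt (fun i j : Fin n => decide (i ≤ j)) = tri n + n := by
  classical
  have hsplit : (univ.filter (fun p : Fin n × Fin n => decide (p.1 ≤ p.2) = true))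
      = univ.filter (fun p : Fin n × Fin n => decide (p.1 < p.2) = true)
        ∪ (univ : Finset (Fin n)).diag := by
    ext p
    simp only [mem_union, mem_filter, mem_univ, true_and, Finset.mem_diag, decide_eq_true_eq]
    constructor
    · intro h
      rcases lt_or_eq_of_le h with h | h
      · exact Or.inl h
      · exact Or.inr h
    · rintro (h | h)
      · exact le_of_lt h
      · exact le_of_eq h
  have hdisj : Disjoint (univ.filter (fun p : Fin n × Fin n => decide (p.1 < p.2) = true))
      ((univ : Finset (Fin n)).diag) := by
    rw [Finset.disjoint_left]
    intro p hp hp'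
    simp only [mem_filter, mem_univ, true_and, decide_eq_true_eq] at hp
    rw [Finset.mem_diag] at hp'
    simp only [mem_univ, true_and] at hp'
    exact absurd hp (by rw [hp'] at *; exact lt_irrefl _)
  have := cnt_lt_pairs n
  unfold cnt at *
  rw [hsplit, Finset.card_union_of_disjoint hdisj, this, Finset.diag_card]
  simp

/-! #### Boolean matrix powers and walks -/

/-- `pw A k = A^(k+1)` -/
def pw {n : ℕ} (A : Matrix (Fin n) (Fin n) Bool) : ℕ → Matrix (Fin n) (Fin n) Bool
  | 0 => A
  | (k+1) => bmul (pw A k) A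

def walk {n : ℕ} (A : Matrix (Fin n) (Fin n) Bool) (k : ℕ) (i j : Fin n) : Prop :=
  ∃ c : ℕ → Fin n, c 0 = i ∧ c k = j ∧ ∀ t < k, A (c t) (c (t+1)) = true

lemma pw_iff_walk {n : ℕ} (A : Matrix (Fin n) (Fin n) Bool) (k : ℕ) (i j : Fin n) :
    pw A k i j = true ↔ walk A (k+1) i j := by
  induction k generalizing j with
  | zero =>
    constructor
    · intro h
      exact ⟨fun t => if t = 0 then i else j, by simp, by simp, by
        intro t ht
        have : t = 0 := by omega
        subst this; simpa [pw] using h⟩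
    · rintro ⟨c, h0, h1, he⟩
      have := he 0 (by omega)
      rw [h0, h1] at this; exact this
  | succ k ih =>
    show (bmul (pw A k) A) i j = true ↔ _
    unfold bmul
    rw [decide_eq_true_eq]
    constructor
    · rintro ⟨l, hl1, hl2⟩
      obtain ⟨c, h0, h1, he⟩ := (ih l).mp hl1
      refine ⟨fun t => if t = k + 2 then j else c t, by simp [h0], by simp, ?_⟩
      intro t ht
      rcases Nat.lt_or_ge t (k+1) with h | h
      · simp only [if_neg (by omega : t ≠ k+2), if_neg (by omega : t+1 ≠ k+2)]
        exact he t h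
      · have : t = k + 1 := by omega
        subst this
        simp only [if_neg (by omega : k+1 ≠ k+2), if_pos rfl, h1]
        exact hl2
    · rintro ⟨c, h0, h1, he⟩
      refine ⟨c (k+1), (ih _).mpr ⟨c, h0, rfl, fun t ht => he t (by omega)⟩, ?_⟩
      have := he (k+1) (by omega)
      rwa [h1] at this

lemma walk_mono {n : ℕ} {A : Matrix (Fin n) (Fin n) Bool} (hA : UpperTri A)
    {u v : Fin n} (h : A u v = true) : u ≤ v := by
  by_contra hc
  rw [hA u v (lt_of_not_ge hc)] at h
  exact absurd h (by simp)

lemma walk_repeat {n : ℕ} {A : Matrix (Fin n) (Fin n) Bool} (hA : UpperTri A)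
    {k : ℕ} (hk : n ≤ k) (c : ℕ → Fin n)
    (he : ∀ t < k, A (c t) (c (t+1)) = true) : ∃ t0 < k, c t0 = c (t0 + 1) := by
  by_contra hc
  push_neg at hc
  have hstrict : ∀ t < k, (c t : ℕ) < c (t+1) := by
    intro t ht
    have h1 := walk_mono hA (he t ht)
    have h2 := hc t ht
    exact lt_of_le_of_ne h1 (fun h => h2 (Fin.ext h))
  have key : ∀ t, t ≤ k → t ≤ (c t : ℕ) := by
    intro t
    induction t with
    | zero => omega
    | succ s ihs =>
      intro hs
      have := hstrict s (by omega)
      have := ihs (by omega)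
      omega
  have := key n hk
  have := (c n).isLt
  omega

lemma pw_stable {n : ℕ} (hn : 1 ≤ n) {A : Matrix (Fin n) (Fin n) Bool} (hA : UpperTri A) :
    pw A n = pw A (n - 1) := by
  obtain ⟨m, rfl⟩ : ∃ m, n = m + 1 := ⟨n - 1, by omega⟩
  funext i j
  show pw A (m + 1) i j = pw A m i j
  rw [Bool.eq_iff_iff]
  rw [pw_iff_walk, pw_iff_walk]
  constructor
  · rintro ⟨c, h0, h1, he⟩
    obtain ⟨t0, ht0, hrep⟩ := walk_repeat hA (by omega : m + 1 ≤ m + 2) c he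
    refine ⟨fun t => if t ≤ t0 then c t else c (t+1), ?_, ?_, ?_⟩
    · simp [h0]
    · by_cases h : m + 1 ≤ t0
      · have : t0 = m + 1 := by omega
        simp only [if_pos (le_refl _)]
        subst this
        rw [hrep] at *
        simpa using h1
      · simp only [if_neg h]; exact h1
    · intro t ht
      rcases Nat.lt_trichotomy t t0 with h | h | h
      · simp only [if_pos (by omega : t ≤ t0), if_pos (by omega : t + 1 ≤ t0)]
        exact he t (by omega)
      · subst h
        simp only [if_pos (le_refl _), if_neg (by omega : ¬ t + 1 ≤ t)]
        rw [hrep]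
        exact he (t+1) (by omega)
      · simp only [if_neg (by omega : ¬ t ≤ t0), if_neg (by omega : ¬ t + 1 ≤ t0)]
        exact he (t+1) (by omega)
  · rintro ⟨c, h0, h1, he⟩
    obtain ⟨t0, ht0, hrep⟩ := walk_repeat hA (by omega : m + 1 ≤ m + 1) c he
    refine ⟨fun t => if t ≤ t0 then c t else c (t-1), ?_, ?_, ?_⟩
    · simp [h0]
    · simp only [if_neg (by omega : ¬ m + 2 ≤ t0)]
      simpa using h1
    · intro t ht
      rcases Nat.lt_trichotomy t t0 with h | h | h
      · simp only [if_pos (by omega : t ≤ t0), if_pos (by omega : t + 1 ≤ t0)]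
        exact he t (by omega)
      · subst h
        simp only [if_pos (le_refl _), if_neg (by omega : ¬ t + 1 ≤ t), (by omega : t + 1 - 1 = t)]
        nth_rewrite 2 [hrep]
        exact he t (by omega)
      · simp only [if_neg (by omega : ¬ t ≤ t0), if_neg (by omega : ¬ t + 1 ≤ t0),
          (by omega : t + 1 - 1 = t)]
        have := he (t-1) (by omega)
        rwa [(by omega : t - 1 + 1 = t)] at this

lemma bmul_diag {n : ℕ} {A B : Matrix (Fin n) (Fin n) Bool}
    (hA : UpperTri A) (hB : UpperTri B) (i : Fin n) : bmul A B i i = (A i i && B i i) := by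
  rw [Bool.eq_iff_iff, Bool.and_eq_true]
  unfold bmul
  rw [decide_eq_true_eq]
  constructor
  · rintro ⟨k, h1, h2⟩
    have hik : i ≤ k := by
      by_contra hc
      rw [hA i k (lt_of_not_ge hc)] at h1; exact absurd h1 (by simp)
    have hki : k ≤ i := by
      by_contra hc
      rw [hB k i (lt_of_not_ge hc)] at h2; exact absurd h2 (by simp)
    have : k = i := le_antisymm hki hik
    subst this; exact ⟨h1, h2⟩
  · rintro ⟨h1, h2⟩; exact ⟨i, h1, h2⟩

/-! #### Chains of transformations -/

/-- an extensive increasing chain of monotone extensive transformations of `Fin m` -/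
def chA (m t : ℕ) (i : Fin m) : Fin m :=
  ⟨(i : ℕ) + min (m - 1 - i) (t - tri (m - 1 - i)), by have := i.isLt; omega⟩

lemma chA_ext (m t : ℕ) (i : Fin m) : i ≤ chA m t i := by
  simp only [chA, Fin.le_def]; omega

lemma chA_mono (m t : ℕ) : Monotone (chA m t) := by
  intro i j hij
  have hij' : (i : ℕ) ≤ j := hij
  simp only [chA, Fin.le_def]
  have hi := i.isLt
  have hj := j.isLt
  have h1 : tri (m - 1 - (j : ℕ)) ≤ tri (m - 1 - (i : ℕ)) := tri_mono (by omega)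
  by_cases hu : 1 ≤ m - 1 - (j : ℕ)
  · have h2 := tri_gap hu (by omega : m - 1 - (j:ℕ) ≤ m - 1 - (i:ℕ))
    omega
  · omega

lemma chA_le (m : ℕ) {t t' : ℕ} (h : t ≤ t') (i : Fin m) : chA m t i ≤ chA m t' i := by
  simp only [chA, Fin.le_def]
  have h1 : tri (m - 1 - (i : ℕ)) ≤ tri (m - 1 - (i : ℕ)) := le_refl _
  omega

lemma chA_ne (m : ℕ) {t : ℕ} (ht : t < tri m) : chA m t ≠ chA m (t+1) := by
  obtain ⟨u, hu1, hum, hut, hut'⟩ := tri_interval ht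
  rw [tri_succ] at hut'
  intro heq
  have := congrFun heq ⟨m - 1 - u, by omega⟩
  rw [Fin.ext_iff] at this
  simp only [chA, Fin.val_mk] at this
  rw [(by omega : m - 1 - (m - 1 - u) = u)] at this
  omega

/-- a decreasing chain of monotone decreasing transformations of `Fin m` -/
def chB (m t : ℕ) (i : Fin m) : Fin m :=
  ⟨(i : ℕ) - min (i : ℕ) (t - tri (i : ℕ)), by have := i.isLt; omega⟩

lemma chB_dec (m t : ℕ) (i : Fin m) : chB m t i ≤ i := by
  simp only [chB, Fin.le_def]; omega

lemma chB_mono (m t : ℕ) : Monotone (chB m t) := by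
  intro i j hij
  have hij' : (i : ℕ) ≤ j := hij
  simp only [chB, Fin.le_def]
  have h1 : tri (i : ℕ) ≤ tri (j : ℕ) := tri_mono hij'
  have h2 : tri ((i : ℕ) + 1) ≤ tri ((j : ℕ) + 1) := tri_mono (by omega)
  rw [tri_succ, tri_succ] at h2
  omega

lemma chB_anti (m : ℕ) {t t' : ℕ} (h : t ≤ t') (i : Fin m) : chB m t' i ≤ chB m t i := by
  simp only [chB, Fin.le_def]
  have h1 : tri (i : ℕ) ≤ tri (i : ℕ) := le_refl _
  omega

lemma chB_ne (m : ℕ) {t : ℕ} (ht : t < tri m) : chB m t ≠ chB m (t+1) := by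
  obtain ⟨u, hu1, hum, hut, hut'⟩ := tri_interval ht
  rw [tri_succ] at hut'
  intro heq
  have := congrFun heq ⟨u, by omega⟩
  rw [Fin.ext_iff] at this
  simp only [chB, Fin.val_mk] at this
  omega

/-- the full-shift map on `Fin (n+2)`, "iterated `k` times" -/
def sg (n k : ℕ) (i : Fin (n+2)) : Fin (n+2) :=
  ⟨min ((i : ℕ) + k) (n+1), by omega⟩

lemma sg_mono (n k : ℕ) : Monotone (sg n k) := by
  intro i j hij
  have hij' : (i : ℕ) ≤ j := hij
  simp only [sg, Fin.le_def]
  omega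

lemma sg_ext (n k : ℕ) (i : Fin (n+2)) : i ≤ sg n k i := by
  have := i.isLt
  simp only [sg, Fin.le_def]
  omega

lemma sg_comp (n k : ℕ) : sg n 1 ∘ sg n k = sg n (k+1) := by
  funext i
  rw [Fin.ext_iff]
  simp only [Function.comp_apply, sg]
  omega

lemma sg_ne (n k k' : ℕ) (hk : k ≤ n+1) (hk' : k' ≤ n+1) (h : k ≠ k') : sg n k ≠ sg n k' := by
  intro heq
  have := congrFun heq ⟨0, by omega⟩
  rw [Fin.ext_iff] at this
  simp only [sg] at this
  omega

end Aux

/-- For every `n ≥ 1`: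
(i) there is no injective multiplicative map from the monotone extensive
transformations of the chain with `n+2` elements to the upper triangular Boolean
`n×n` matrices, so the Catalan monoid `C_{n+2}` does not embed into `T_n`;
(ii) there is no injective map preserving both multiplication and pointwise-max
addition from the monotone extensive transformations of the chain with `n+1`
elements to the upper triangular Boolean `n×n` matrices, so the Catalan semiring
`C_{n+1}` does not embed into the semiring `T_n`; and likewise no such map exists
from the monotone decreasing transformations of the chain with `n+2` elements, so
`C⁻_{n+2}` does not embed into `T_n`. (Here `αβ` denotes `α` followed by `β`.) -/
theorem catalan_no_embedding (n : ℕ) (hn : 1 ≤ n) :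
    (¬ ∃ f : (Fin (n + 2) → Fin (n + 2)) → Matrix (Fin n) (Fin n) Bool,
      (∀ α, (Monotone α ∧ ∀ i, i ≤ α i) → UpperTri (f α)) ∧
      Set.InjOn f {α | Monotone α ∧ ∀ i, i ≤ α i} ∧
      (∀ α β : Fin (n + 2) → Fin (n + 2),
        (Monotone α ∧ ∀ i, i ≤ α i) → (Monotone β ∧ ∀ i, i ≤ β i) →
        f (β ∘ α) = bmul (f α) (f β))) ∧
    (¬ ∃ g : (Fin (n + 1) → Fin (n + 1)) → Matrix (Fin n) (Fin n) Bool,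
      (∀ α, (Monotone α ∧ ∀ i, i ≤ α i) → UpperTri (g α)) ∧
      Set.InjOn g {α | Monotone α ∧ ∀ i, i ≤ α i} ∧
      (∀ α β : Fin (n + 1) → Fin (n + 1),
        (Monotone α ∧ ∀ i, i ≤ α i) → (Monotone β ∧ ∀ i, i ≤ β i) →
        g (β ∘ α) = bmul (g α) (g β) ∧
        g (fun i => max (α i) (β i)) = badd (g α) (g β))) ∧
    (¬ ∃ h : (Fin (n + 2) → Fin (n + 2)) → Matrix (Fin n) (Fin n) Bool,
      (∀ α, (Monotone α ∧ ∀ i, α i ≤ i) → UpperTri (h α)) ∧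
      Set.InjOn h {α | Monotone α ∧ ∀ i, α i ≤ i} ∧
      (∀ α β : Fin (n + 2) → Fin (n + 2),
        (Monotone α ∧ ∀ i, α i ≤ i) → (Monotone β ∧ ∀ i, β i ≤ i) →
        h (β ∘ α) = bmul (h α) (h β) ∧
        h (fun i => max (α i) (β i)) = badd (h α) (h β))) := by
  refine ⟨?_, ?_, ?_⟩
  · -- Part (i)
    rintro ⟨f, hUT, hInj, hHom⟩
    obtain ⟨k, rfl⟩ : ∃ k, n = k + 1 := ⟨n - 1, by omega⟩
    have hmem : ∀ j, (sg (k+1) j) ∈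
        {α : Fin (k+1+2) → Fin (k+1+2) | Monotone α ∧ ∀ i, i ≤ α i} :=
      fun j => ⟨sg_mono _ _, sg_ext _ _⟩
    have hA : UpperTri (f (sg (k+1) 1)) := hUT _ (hmem 1)
    have hpow : ∀ j, f (sg (k+1) (j+1)) = pw (f (sg (k+1) 1)) j := by
      intro j
      induction j with
      | zero => rfl
      | succ j ih =>
        have hh := hHom (sg (k+1) (j+1)) (sg (k+1) 1) (hmem _) (hmem _)
        rw [sg_comp] at hh
        rw [hh, ih]
        rfl
    have hst : pw (f (sg (k+1) 1)) (k+1) = pw (f (sg (k+1) 1)) k :=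
      pw_stable (by omega) hA
    have heq : f (sg (k+1) (k+2)) = f (sg (k+1) (k+1)) := by
      rw [hpow (k+1), hpow k]
      exact hst
    have := hInj (hmem (k+2)) (hmem (k+1)) heq
    exact sg_ne (k+1) (k+2) (k+1) (by omega) (by omega) (by omega) this
  · -- Part (ii)
    rintro ⟨g, hUT, hInj, hHom⟩
    set ω : Fin (n+1) → Fin (n+1) := fun _ => ⟨n, by omega⟩ with hωdef
    have hωmem : Monotone ω ∧ ∀ i, i ≤ ω i :=
      ⟨monotone_const, fun i => by
        simp only [hωdef, Fin.le_def, Fin.val_mk]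
        have := i.isLt; omega⟩
    have hchmem : ∀ t, Monotone (chA (n+1) t) ∧ ∀ i, i ≤ chA (n+1) t i :=
      fun t => ⟨chA_mono _ _, chA_ext _ _⟩
    have hdiag : ∀ t (i : Fin n), g (chA (n+1) t) i i = g ω i i := by
      intro t i
      obtain ⟨hmul, hadd⟩ := hHom (chA (n+1) t) ω (hchmem t) hωmem
      have hcomp : ω ∘ (chA (n+1) t) = ω := rfl
      have hmax : (fun i => max (chA (n+1) t i) (ω i)) = ω := by
        funext x
        exact max_eq_right (by
          simp only [hωdef, Fin.le_def, Fin.val_mk]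
          have := (chA (n+1) t x).isLt; omega)
      rw [hcomp] at hmul
      rw [hmax] at hadd
      have h1 := congrFun (congrFun hmul i) i
      rw [bmul_diag (hUT _ (hchmem t)) (hUT _ hωmem)] at h1
      have h2 := congrFun (congrFun hadd i) i
      simp only [badd] at h2
      cases hb : g (chA (n+1) t) i i <;> cases hw : g ω i i <;>
        rw [hb, hw] at h1 h2 <;> revert h1 h2 <;> decide
    have hstep : ∀ t i j, g (chA (n+1) t) i j = true → g (chA (n+1) (t+1)) i j = true := by
      intro t i j hij
      obtain ⟨-, hadd⟩ := hHom (chA (n+1) t) (chA (n+1) (t+1)) (hchmem t) (hchmem (t+1))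
      have hmax : (fun i => max (chA (n+1) t i) (chA (n+1) (t+1) i)) = chA (n+1) (t+1) := by
        funext x
        exact max_eq_right (chA_le _ (by omega) x)
      rw [hmax] at hadd
      have := congrFun (congrFun hadd i) j
      simp only [badd] at this
      rw [this, hij]
      simp
    have hne : ∀ t, t < tri (n+1) →
        ∃ i j : Fin n, i < j ∧ g (chA (n+1) t) i j = false ∧ g (chA (n+1) (t+1)) i j = true := by
      intro t ht
      have hgne : g (chA (n+1) t) ≠ g (chA (n+1) (t+1)) :=
        fun h => chA_ne _ ht (hInj (hchmem t) (hchmem (t+1)) h)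
      have hex : ∃ i j, g (chA (n+1) t) i j ≠ g (chA (n+1) (t+1)) i j := by
        by_contra hc
        push_neg at hc
        exact hgne (by funext i j; exact hc i j)
      obtain ⟨i, j, hij⟩ := hex
      have hlt : i < j := by
        rcases lt_trichotomy i j with h | h | h
        · exact h
        · exfalso; cases h; exact hij ((hdiag t i).trans (hdiag (t+1) i).symm)
        · exact absurd ((hUT _ (hchmem t) i j h).trans
            (hUT _ (hchmem (t+1)) i j h).symm) hij
      have hf : g (chA (n+1) t) i j = false := by
        cases h' : g (chA (n+1) t) i j
        · rfl
        · exact absurd ((h').trans (hstep t i j h').symm) hij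
      have htr : g (chA (n+1) (t+1)) i j = true := by
        cases h' : g (chA (n+1) (t+1)) i j
        · exact absurd (hf.trans h'.symm) hij
        · rfl
      exact ⟨i, j, hlt, hf, htr⟩
    have hcount : ∀ t, t ≤ tri (n+1) →
        t ≤ cnt (fun i j : Fin n => decide (i < j) && g (chA (n+1) t) i j) := by
      intro t
      induction t with
      | zero => exact fun _ => Nat.zero_le _
      | succ s ih =>
        intro hs
        have h1 := ih (by omega)
        have h2 : cnt (fun i j : Fin n => decide (i < j) && g (chA (n+1) s) i j)
            < cnt (fun i j : Fin n => decide (i < j) && g (chA (n+1) (s+1)) i j) := by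
          apply cnt_lt
          · intro i j h
            rw [Bool.and_eq_true] at h ⊢
            exact ⟨h.1, hstep s i j h.2⟩
          · obtain ⟨i, j, hlt, hf, ht⟩ := hne s (by omega)
            exact ⟨i, j, by simp [hf], by simp [hlt, ht]⟩
        omega
    have hfinal := hcount (tri (n+1)) (le_refl _)
    have hb := cnt_le (R := fun i j : Fin n => decide (i < j) && g (chA (n+1) (tri (n+1))) i j)
      (S := fun i j : Fin n => decide (i < j))
      (fun i j h => by rw [Bool.and_eq_true] at h; exact h.1)
    rw [cnt_lt_pairs] at hb
    have e2 : tri (n+1) = tri n + n := tri_succ n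
    omega
  · -- Part (iii)
    rintro ⟨g, hUT, hInj, hHom⟩
    set T : ℕ := tri (n+2) with hT
    set D : ℕ → (Fin (n+2) → Fin (n+2)) := fun t => chB (n+2) (T - t) with hD
    have hchmem : ∀ t, Monotone (D t) ∧ ∀ i, D t i ≤ i :=
      fun t => ⟨chB_mono _ _, chB_dec _ _⟩
    have hstep : ∀ t i j, g (D t) i j = true → g (D (t+1)) i j = true := by
      intro t i j hij
      obtain ⟨-, hadd⟩ := hHom (D t) (D (t+1)) (hchmem t) (hchmem (t+1))
      have hmax : (fun i => max (D t i) (D (t+1) i)) = D (t+1) := by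
        funext x
        exact max_eq_right (chB_anti _ (by omega) x)
      rw [hmax] at hadd
      have := congrFun (congrFun hadd i) j
      simp only [badd] at this
      rw [this, hij]
      simp
    have hne : ∀ t, t < T →
        ∃ i j : Fin n, i ≤ j ∧ g (D t) i j = false ∧ g (D (t+1)) i j = true := by
      intro t ht
      have hDne : D t ≠ D (t+1) := by
        have h1 : T - (t+1) < tri (n+2) := by omega
        have h2 := chB_ne (n+2) h1
        rw [(by omega : T - (t+1) + 1 = T - t)] at h2
        exact fun h => h2 (h.symm)
      have hgne : g (D t) ≠ g (D (t+1)) :=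
        fun h => hDne (hInj (hchmem t) (hchmem (t+1)) h)
      have hex : ∃ i j, g (D t) i j ≠ g (D (t+1)) i j := by
        by_contra hc
        push_neg at hc
        exact hgne (by funext i j; exact hc i j)
      obtain ⟨i, j, hij⟩ := hex
      have hle : i ≤ j := by
        by_contra hc
        have h := lt_of_not_ge hc
        exact absurd ((hUT _ (hchmem t) i j h).trans
          (hUT _ (hchmem (t+1)) i j h).symm) hij
      have hf : g (D t) i j = false := by
        cases h' : g (D t) i j
        · rfl
        · exact absurd ((h').trans (hstep t i j h').symm) hij
      have htr : g (D (t+1)) i j = true := by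
        cases h' : g (D (t+1)) i j
        · exact absurd (hf.trans h'.symm) hij
        · rfl
      exact ⟨i, j, hle, hf, htr⟩
    have hcount : ∀ t, t ≤ T →
        t ≤ cnt (fun i j : Fin n => decide (i ≤ j) && g (D t) i j) := by
      intro t
      induction t with
      | zero => exact fun _ => Nat.zero_le _
      | succ s ih =>
        intro hs
        have h1 := ih (by omega)
        have h2 : cnt (fun i j : Fin n => decide (i ≤ j) && g (D s) i j)
            < cnt (fun i j : Fin n => decide (i ≤ j) && g (D (s+1)) i j) := by
          apply cnt_lt
          · intro i j h
            rw [Bool.and_eq_true] at h ⊢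
            exact ⟨h.1, hstep s i j h.2⟩
          · obtain ⟨i, j, hle, hf, ht⟩ := hne s (by omega)
            exact ⟨i, j, by simp [hf], by simp [hle, ht]⟩
        omega
    have hfinal := hcount T (le_refl _)
    have hb := cnt_le (R := fun i j : Fin n => decide (i ≤ j) && g (D T) i j)
      (S := fun i j : Fin n => decide (i ≤ j))
      (fun i j h => by rw [Bool.and_eq_true] at h; exact h.1)
    rw [cnt_le_pairs] at hb
    have e1 : tri (n+2) = tri (n+1) + (n+1) := tri_succ _
    have e2 : tri (n+1) = tri n + n := tri_succ _
    omega
end
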